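/- Two infinite SAWs avoid each other with probability at least A^{−1}: if η₁^∞ and η₂^∞ are independent infinite self-avoiding walks from 0 (each being the weak limit of uniform finite SAWs) and c_n ~ A μ^n, then P(η₁^∞[1,∞) ∩ η₂^∞[1,∞) = ∅) ≥ A^{−1} > 0. -/

import Mathlib

open MeasureTheory Filter Topology

/-- `x` and `y` are nearest neighbours in `ℤ^d`. -/
def IsNbr (d : ℕ) (x y : Fin d → ℤ) : Prop :=
  (∑ j, (x j - y j).natAbs) = 1

/-- Self-avoiding paths of length `n` in `ℤ^d` started at the origin,
encoded as functions `ℕ → ℤ^d` frozen after time `n`. -/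
def SAWset (d n : ℕ) : Set (ℕ → Fin d → ℤ) :=
  {ω | ω 0 = 0 ∧ (∀ i < n, IsNbr d (ω (i + 1)) (ω i)) ∧
    (∀ i ≤ n, ∀ j ≤ n, ω i = ω j → i = j) ∧ ∀ i, n ≤ i → ω i = ω n}

/-- The number `c_n` of `n`-step self-avoiding paths. -/
noncomputable def cSAW (d n : ℕ) : ℕ := Nat.card (SAWset d n)

/-- The cylinder event that a path starts with `ζ` up to time `k`. -/
def startSet (d k : ℕ) (ζ : ℕ → Fin d → ℤ) : Set (ℕ → Fin d → ℤ) :=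
  {ω | ∀ i ≤ k, ω i = ζ i}

/-- The event that a path (translated to start at `ζ k`) escapes `ζ`. -/
def escSet (d k : ℕ) (ζ : ℕ → Fin d → ℤ) : Set (ℕ → Fin d → ℤ) :=
  {ω | ∀ i, 1 ≤ i → ∀ j ≤ k, ω i + ζ k ≠ ζ j}

/-- `c_m(ζ)`: the number of `m`-step self-avoiding paths starting with `ζ`. -/
noncomputable def cExt (d m k : ℕ) (ζ : ℕ → Fin d → ℤ) : ℕ :=
  Nat.card ((SAWset d m ∩ startSet d k ζ : Set (ℕ → Fin d → ℤ)))

/-- Infinite self-avoiding paths started at the origin. -/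
def InfSAW (d : ℕ) : Set (ℕ → Fin d → ℤ) :=
  {ω | ω 0 = 0 ∧ (∀ i, IsNbr d (ω (i + 1)) (ω i)) ∧ Function.Injective ω}

/-- The `m`-fold shift `T^m`: `(T^m ω)(i) = ω(m+i) − ω(m)`. -/
def shiftW (d m : ℕ) (ω : ℕ → Fin d → ℤ) : ℕ → Fin d → ℤ :=
  fun i => ω (m + i) - ω m

/-- The shift operator `T`. -/
def Tsh (d : ℕ) (ω : ℕ → Fin d → ℤ) : ℕ → Fin d → ℤ :=
  fun i => ω (i + 1) - ω 1

/-! ### Auxiliary lemmas -/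

lemma isNbr_symm {d : ℕ} {x y : Fin d → ℤ} (h : IsNbr d x y) : IsNbr d y x := by
  unfold IsNbr at *; rw [← h]; exact Finset.sum_congr rfl fun j _ => by omega

lemma isNbr_sub {d : ℕ} {x y c : Fin d → ℤ} (h : IsNbr d x y) : IsNbr d (x - c) (y - c) := by
  unfold IsNbr at *; rw [← h]
  exact Finset.sum_congr rfl fun j _ => by simp only [Pi.sub_apply]; omega

lemma sawset_finite (d n : ℕ) : (SAWset d n).Finite := by
  classical
  set D : Set (Fin d → ℤ) := {v | ∀ j, v j ∈ ({-1, 0, 1} : Set ℤ)} with hD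
  have hDfin : D.Finite := Set.Finite.pi' (fun _ => (Set.finite_singleton _).insert _ |>.insert _)
  set f : (ℕ → Fin d → ℤ) → (Fin n → (Fin d → ℤ)) := fun ω i => ω (i + 1) - ω i with hf
  have himg : f '' SAWset d n ⊆ {g | ∀ i, g i ∈ D} := by
    rintro g ⟨ω, hω, rfl⟩ i
    have hnbr := hω.2.1 i i.isLt
    intro j
    have h1 : ((ω (↑i + 1) j - ω ↑i j).natAbs) ≤ 1 :=
      le_trans (Finset.single_le_sum (f := fun j => (ω (↑i + 1) j - ω ↑i j).natAbs)
        (fun _ _ => Nat.zero_le _) (Finset.mem_univ j)) (le_of_eq hnbr)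
    have : f ω i j = ω (↑i + 1) j - ω ↑i j := rfl
    rw [this]
    simp only [Set.mem_insert_iff, Set.mem_singleton_iff]
    omega
  have hinj : Set.InjOn f (SAWset d n) := by
    intro ω hω ω' hω' hff
    have key : ∀ i, i ≤ n → ω i = ω' i := by
      intro i
      induction i with
      | zero => intro _; rw [hω.1, hω'.1]
      | succ k ih =>
        intro hk
        have hk' : k < n := by omega
        have h1 : f ω ⟨k, hk'⟩ = f ω' ⟨k, hk'⟩ := by rw [hff]
        have h2 : ω (k + 1) - ω k = ω' (k + 1) - ω' k := h1
        have h3 := ih (by omega)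
        calc ω (k + 1) = (ω (k+1) - ω k) + ω k := by ring
        _ = (ω' (k+1) - ω' k) + ω' k := by rw [h2, h3]
        _ = ω' (k + 1) := by ring
    funext i
    rcases le_or_gt i n with h | h
    · exact key i h
    · rw [hω.2.2.2 i h.le, hω'.2.2.2 i h.le, key n le_rfl]
  have : (f '' SAWset d n).Finite := (Set.Finite.pi' fun _ => hDfin).subset himg
  exact Set.Finite.of_finite_image this hinj

/-- the reversed-first-half walk -/
def eta1 (d n : ℕ) (ω : ℕ → Fin d → ℤ) : ℕ → Fin d → ℤ :=
  fun i => ω (n - min i n) - ω n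

/-- the second-half walk -/
def eta2 (d n : ℕ) (ω : ℕ → Fin d → ℤ) : ℕ → Fin d → ℤ :=
  fun i => ω (n + min i n) - ω n

/-- freeze at time m -/
def frz (d m : ℕ) (ω : ℕ → Fin d → ℤ) : ℕ → Fin d → ℤ := fun i => ω (min i m)

lemma frz_mem {d n m : ℕ} {ω : ℕ → Fin d → ℤ} (hω : ω ∈ SAWset d n) (hmn : m ≤ n) :
    frz d m ω ∈ SAWset d m := by
  obtain ⟨h0, hnbr, hinj, hfr⟩ := hω
  refine ⟨by simpa [frz] using h0, ?_, ?_, ?_⟩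
  · intro i hi
    have e1 : frz d m ω (i+1) = ω (i+1) := by simp [frz, Nat.min_eq_left (by omega : i+1 ≤ m)]
    have e2 : frz d m ω i = ω i := by simp [frz, Nat.min_eq_left (by omega : i ≤ m)]
    rw [e1, e2]; exact hnbr i (by omega)
  · intro i hi j hj h
    simp only [frz, Nat.min_eq_left hi, Nat.min_eq_left hj] at h
    exact hinj i (by omega) j (by omega) h
  · intro i hi; simp [frz, Nat.min_eq_left (le_refl m), Nat.min_eq_right hi]

lemma eta1_mem {d n : ℕ} {ω : ℕ → Fin d → ℤ} (hω : ω ∈ SAWset d (2*n)) :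
    eta1 d n ω ∈ SAWset d n := by
  obtain ⟨h0, hnbr, hinj, hfr⟩ := hω
  refine ⟨by simp [eta1], ?_, ?_, ?_⟩
  · intro i hi
    have e1 : eta1 d n ω (i+1) = ω (n - (i+1)) - ω n := by
      simp [eta1, Nat.min_eq_left (by omega : i+1 ≤ n)]
    have e2 : eta1 d n ω i = ω (n - i) - ω n := by
      simp [eta1, Nat.min_eq_left (by omega : i ≤ n)]
    rw [e1, e2]
    have h3 : n - (i+1) + 1 = n - i := by omega
    have := hnbr (n - (i+1)) (by omega)
    rw [h3] at this
    exact isNbr_sub (isNbr_symm this)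
  · intro i hi j hj h
    simp only [eta1, Nat.min_eq_left hi, Nat.min_eq_left hj, sub_left_inj] at h
    have := hinj (n - i) (by omega) (n - j) (by omega) h
    omega
  · intro i hi
    simp [eta1, Nat.min_eq_right hi, Nat.min_eq_right (le_refl n)]

lemma eta2_mem {d n : ℕ} {ω : ℕ → Fin d → ℤ} (hω : ω ∈ SAWset d (2*n)) :
    eta2 d n ω ∈ SAWset d n := by
  obtain ⟨h0, hnbr, hinj, hfr⟩ := hω
  refine ⟨by simp [eta2], ?_, ?_, ?_⟩
  · intro i hi
    have e1 : eta2 d n ω (i+1) = ω (n + (i+1)) - ω n := by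
      simp [eta2, Nat.min_eq_left (by omega : i+1 ≤ n)]
    have e2 : eta2 d n ω i = ω (n + i) - ω n := by
      simp [eta2, Nat.min_eq_left (by omega : i ≤ n)]
    rw [e1, e2]
    have := hnbr (n + i) (by omega)
    have h3 : n + i + 1 = n + (i + 1) := by omega
    rw [h3] at this
    exact isNbr_sub this
  · intro i hi j hj h
    simp only [eta2, Nat.min_eq_left hi, Nat.min_eq_left hj, sub_left_inj] at h
    have := hinj (n + i) (by omega) (n + j) (by omega) h
    omega
  · intro i hi
    simp [eta2, Nat.min_eq_right hi, Nat.min_eq_right (le_refl n)]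

lemma eta_injOn (d n : ℕ) :
    Set.InjOn (fun ω => (eta1 d n ω, eta2 d n ω)) (SAWset d (2*n)) := by
  intro ω hω ω' hω' h
  have h1 : eta1 d n ω = eta1 d n ω' := congrArg Prod.fst h
  have h2 : eta2 d n ω = eta2 d n ω' := congrArg Prod.snd h
  have key : ∀ ψ : ℕ → Fin d → ℤ, ψ ∈ SAWset d (2*n) → ∀ k,
      ψ k = (if k ≤ n then eta1 d n ψ (n - k) - eta1 d n ψ n
             else eta2 d n ψ (min k (2*n) - n) - eta1 d n ψ n) := by
    intro ψ hψ k
    have hψ0 := hψ.1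
    have hfr := hψ.2.2.2
    have he1n : eta1 d n ψ n = - ψ n := by
      simp [eta1, Nat.min_eq_right (le_refl n), hψ0]
    split_ifs with hk
    · have : eta1 d n ψ (n - k) = ψ k - ψ n := by
        simp [eta1, Nat.min_eq_left (by omega : n - k ≤ n), Nat.sub_sub_self hk]
      rw [this, he1n]; ring
    · push_neg at hk
      rcases le_or_gt k (2*n) with hk2 | hk2
      · have : eta2 d n ψ (min k (2*n) - n) = ψ k - ψ n := by
          have hmk : min k (2*n) = k := Nat.min_eq_left hk2
          rw [hmk]
          simp only [eta2]
          rw [show min (k - n) n = k - n by omega, show n + (k - n) = k by omega]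
        rw [this, he1n]; ring
      · have hmk : min k (2*n) = 2*n := Nat.min_eq_right hk2.le
        have hk3 : ψ k = ψ (2*n) := hfr k hk2.le
        have : eta2 d n ψ (min k (2*n) - n) = ψ (2*n) - ψ n := by
          rw [hmk]
          simp only [eta2]
          rw [show min (2*n - n) n = n by omega, show n + n = 2*n by omega]
        rw [this, he1n, hk3]; ring
  funext k
  rw [key ω hω k, key ω' hω' k, h1, h2]

/-- pairs of mutually avoiding `m`-step SAWs -/
def AvoidPairs (d m : ℕ) : Set ((ℕ → Fin d → ℤ) × (ℕ → Fin d → ℤ)) :=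
  {p | p.1 ∈ SAWset d m ∧ p.2 ∈ SAWset d m ∧
    ∀ i, 1 ≤ i → i ≤ m → ∀ j, 1 ≤ j → j ≤ m → p.1 i ≠ p.2 j}

lemma avoidPairs_finite (d m : ℕ) : (AvoidPairs d m).Finite :=
  ((sawset_finite d m).prod (sawset_finite d m)).subset fun _ hp => ⟨hp.1, hp.2.1⟩

lemma my_ncard_biUnion_le {α ι : Type*} [DecidableEq ι] (s : Finset ι) (t : ι → Set α) :
    (⋃ i ∈ s, t i).ncard ≤ ∑ i ∈ s, (t i).ncard := by
  induction s using Finset.induction with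
  | empty => simp
  | insert a s' h ih =>
    rw [Finset.sum_insert h, Finset.set_biUnion_insert]
    exact (Set.ncard_union_le _ _).trans (by gcongr)

lemma my_ncard_prod {α β : Type*} (s : Set α) (t : Set β) :
    (s ×ˢ t).ncard = s.ncard * t.ncard := by
  rw [← Nat.card_coe_set_eq, ← Nat.card_coe_set_eq, ← Nat.card_coe_set_eq,
    ← Nat.card_prod]
  exact Nat.card_congr (Equiv.Set.prod s t)

lemma counting (d m n : ℕ) (hmn : m ≤ n) :
    (cSAW d (2*n) : ℕ) ≤
      ∑ p ∈ (avoidPairs_finite d m).toFinset, cExt d n m p.1 * cExt d n m p.2 := by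
  classical
  set F := (avoidPairs_finite d m).toFinset with hF
  set S : ((ℕ → Fin d → ℤ) × (ℕ → Fin d → ℤ)) → Set ((ℕ → Fin d → ℤ) × (ℕ → Fin d → ℤ)) :=
    fun p => (SAWset d n ∩ startSet d m p.1) ×ˢ (SAWset d n ∩ startSet d m p.2) with hS
  have hSfin : ∀ p, (S p).Finite :=
    fun p => ((sawset_finite d n).subset Set.inter_subset_left).prod
      ((sawset_finite d n).subset Set.inter_subset_left)
  have himg : (fun ω => (eta1 d n ω, eta2 d n ω)) '' SAWset d (2*n) ⊆ ⋃ p ∈ F, S p := by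
    rintro _ ⟨ω, hω, rfl⟩
    have h1 := eta1_mem hω
    have h2 := eta2_mem hω
    set ζ₁ := frz d m (eta1 d n ω)
    set ζ₂ := frz d m (eta2 d n ω)
    have hζ : (ζ₁, ζ₂) ∈ AvoidPairs d m := by
      refine ⟨frz_mem h1 hmn, frz_mem h2 hmn, ?_⟩
      intro i hi1 him j hj1 hjm heq
      have e1 : ζ₁ i = ω (n - i) - ω n := by
        simp only [ζ₁, frz, eta1, Nat.min_eq_left him, Nat.min_eq_left (him.trans hmn)]
      have e2 : ζ₂ j = ω (n + j) - ω n := by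
        simp only [ζ₂, frz, eta2, Nat.min_eq_left hjm, Nat.min_eq_left (hjm.trans hmn)]
      have heq2 : ζ₁ i = ζ₂ j := heq
      rw [e1, e2, sub_left_inj] at heq2
      have := hω.2.2.1 (n - i) (by omega) (n + j) (by omega) heq2
      omega
    refine Set.mem_biUnion ((avoidPairs_finite d m).mem_toFinset.mpr hζ) ?_
    refine ⟨⟨h1, ?_⟩, h2, ?_⟩
    · intro i him
      simp only [ζ₁, frz, Nat.min_eq_left him]
    · intro i him
      simp only [ζ₂, frz, Nat.min_eq_left him]
  calc cSAW d (2*n) = (SAWset d (2*n)).ncard := Nat.card_coe_set_eq _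
    _ = ((fun ω => (eta1 d n ω, eta2 d n ω)) '' SAWset d (2*n)).ncard :=
        (Set.ncard_image_of_injOn (eta_injOn d n)).symm
    _ ≤ (⋃ p ∈ F, S p).ncard :=
        Set.ncard_le_ncard himg (F.finite_toSet.biUnion fun p _ => hSfin p)
    _ ≤ ∑ p ∈ F, (S p).ncard := my_ncard_biUnion_le F S
    _ = ∑ p ∈ F, cExt d n m p.1 * cExt d n m p.2 := by
        refine Finset.sum_congr rfl fun p _ => ?_
        rw [hS]
        simp only [my_ncard_prod, cExt, Nat.card_coe_set_eq]

lemma measurable_startSet (d k : ℕ) (ζ : ℕ → Fin d → ℤ) :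
    MeasurableSet (startSet d k ζ) := by
  have : startSet d k ζ = ⋂ (i : ℕ) (_ : i ≤ k), (fun ω : ℕ → Fin d → ℤ => ω i) ⁻¹' {ζ i} := by
    ext ω; simp [startSet]
  rw [this]
  exact MeasurableSet.iInter fun i => MeasurableSet.iInter fun _ =>
    measurable_pi_apply i (measurableSet_singleton _)

lemma measurable_infSAW (d : ℕ) : MeasurableSet (InfSAW d) := by
  have : InfSAW d = ((fun ω : ℕ → Fin d → ℤ => ω 0) ⁻¹' {0}) ∩
      ((⋂ i, {ω : ℕ → Fin d → ℤ | IsNbr d (ω (i+1)) (ω i)}) ∩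
       (⋂ (i : ℕ) (j : ℕ) (_ : i ≠ j), {ω : ℕ → Fin d → ℤ | ω i = ω j}ᶜ)) := by
    ext ω
    simp only [InfSAW, Set.mem_setOf_eq, Set.mem_inter_iff, Set.mem_preimage,
      Set.mem_singleton_iff, Set.mem_iInter, Set.mem_compl_iff]
    refine and_congr_right fun _ => and_congr_right fun _ => ?_
    constructor
    · intro hinj i j hij h; exact hij (hinj h)
    · intro h a b hab
      by_contra hne
      exact h a b hne hab
  rw [this]
  refine MeasurableSet.inter (measurable_pi_apply 0 (measurableSet_singleton _)) ?_
  refine MeasurableSet.inter ?_ ?_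
  · refine MeasurableSet.iInter fun i => ?_
    have : {ω : ℕ → Fin d → ℤ | IsNbr d (ω (i+1)) (ω i)} =
        (fun ω : ℕ → Fin d → ℤ => (ω (i+1), ω i)) ⁻¹' {q | IsNbr d q.1 q.2} := rfl
    rw [this]
    exact ((measurable_pi_apply (i+1)).prodMk (measurable_pi_apply i))
      ((Set.to_countable _).measurableSet)
  · refine MeasurableSet.iInter fun i => MeasurableSet.iInter fun j =>
      MeasurableSet.iInter fun _ => MeasurableSet.compl ?_
    exact measurableSet_eq_fun (measurable_pi_apply i) (measurable_pi_apply j)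

/-- the truncated avoidance event -/
def Em (d m : ℕ) : Set ((ℕ → Fin d → ℤ) × (ℕ → Fin d → ℤ)) :=
  {p | ∀ i, 1 ≤ i → i ≤ m → ∀ j, 1 ≤ j → j ≤ m → p.1 i ≠ p.2 j}

lemma measurable_Em (d m : ℕ) : MeasurableSet (Em d m) := by
  have : Em d m = ⋂ (i : ℕ) (_ : 1 ≤ i) (_ : i ≤ m) (j : ℕ) (_ : 1 ≤ j) (_ : j ≤ m),
      {p : (ℕ → Fin d → ℤ) × (ℕ → Fin d → ℤ) | p.1 i = p.2 j}ᶜ := by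
    ext p; simp [Em]
  rw [this]
  refine .iInter fun i => .iInter fun _ => .iInter fun _ => .iInter fun j =>
    .iInter fun _ => .iInter fun _ => MeasurableSet.compl ?_
  exact measurableSet_eq_fun
    (f := fun p : (ℕ → Fin d → ℤ) × (ℕ → Fin d → ℤ) => p.1 i)
    (g := fun p : (ℕ → Fin d → ℤ) × (ℕ → Fin d → ℤ) => p.2 j)
    ((measurable_pi_apply i).comp measurable_fst) ((measurable_pi_apply j).comp measurable_snd)

lemma antitone_Em (d : ℕ) : Antitone (Em d) := by
  intro a b hab p hp i hi1 hia j hj1 hja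
  exact hp i hi1 (hia.trans hab) j hj1 (hja.trans hab)

lemma iInter_Em (d : ℕ) : (⋂ m, Em d m) =
    {p : (ℕ → Fin d → ℤ) × (ℕ → Fin d → ℤ) | ∀ i, 1 ≤ i → ∀ j, 1 ≤ j → p.1 i ≠ p.2 j} := by
  ext p
  simp only [Set.mem_iInter, Set.mem_setOf_eq, Em]
  constructor
  · intro h i hi j hj
    exact h (max i j) i hi (le_max_left _ _) j hj (le_max_right _ _)
  · intro h m i hi1 _ j hj1 _
    exact h i hi1 j hj1

lemma start_eq_of_mem {d m : ℕ} {ζ ζ' ω : ℕ → Fin d → ℤ} (hζ : ζ ∈ SAWset d m)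
    (hζ' : ζ' ∈ SAWset d m) (h : ω ∈ startSet d m ζ) (h' : ω ∈ startSet d m ζ') : ζ = ζ' := by
  funext i
  rcases le_or_gt i m with hi | hi
  · rw [← h i hi, ← h' i hi]
  · rw [hζ.2.2.2 i hi.le, hζ'.2.2.2 i hi.le, ← h m le_rfl, ← h' m le_rfl]

lemma measure_bound (d m : ℕ) (P : Measure (ℕ → Fin d → ℤ)) [IsProbabilityMeasure P]
    (hsupp : P (InfSAW d) = 1) :
    ∑ p ∈ (avoidPairs_finite d m).toFinset,
      (P (startSet d m p.1)).toReal * (P (startSet d m p.2)).toReal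
      ≤ ((P.prod P) (Em d m)).toReal := by
  classical
  have hPc : P (InfSAW d)ᶜ = 0 := by
    rw [measure_compl (measurable_infSAW d) (measure_ne_top P _), hsupp, measure_univ, tsub_self]
  set G : ((ℕ → Fin d → ℤ) × (ℕ → Fin d → ℤ)) → Set ((ℕ → Fin d → ℤ) × (ℕ → Fin d → ℤ)) :=
    fun p => (startSet d m p.1 ∩ InfSAW d) ×ˢ (startSet d m p.2 ∩ InfSAW d) with hG
  have hGmeas : ∀ p, MeasurableSet (G p) := fun p =>
    ((measurable_startSet d m p.1).inter (measurable_infSAW d)).prod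
      ((measurable_startSet d m p.2).inter (measurable_infSAW d))
  have hGdisj : Set.PairwiseDisjoint ((avoidPairs_finite d m).toFinset : Set _) G := by
    intro p hp q hq hpq
    rw [Set.Finite.coe_toFinset] at hp hq
    refine Set.disjoint_left.mpr fun a ha ha' => hpq ?_
    have h1 := start_eq_of_mem hp.1 hq.1 ha.1.1 ha'.1.1
    have h2 := start_eq_of_mem hp.2.1 hq.2.1 ha.2.1 ha'.2.1
    exact Prod.ext h1 h2
  have hGsub : ∀ p ∈ (avoidPairs_finite d m).toFinset, G p ⊆ Em d m := by
    intro p hp a ha i hi1 him j hj1 hjm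
    rw [Set.Finite.mem_toFinset] at hp
    rw [ha.1.1 i him, ha.2.1 j hjm]
    exact hp.2.2 i hi1 him j hj1 hjm
  have key : ∑ p ∈ (avoidPairs_finite d m).toFinset, P (startSet d m p.1) * P (startSet d m p.2)
      ≤ (P.prod P) (Em d m) := by
    have e1 : ∀ p, P (startSet d m p.1) * P (startSet d m p.2) = (P.prod P) (G p) := by
      intro p
      rw [hG]
      simp only [Measure.prod_prod]
      rw [measure_inter_conull hPc, measure_inter_conull hPc]
    calc ∑ p ∈ (avoidPairs_finite d m).toFinset, P (startSet d m p.1) * P (startSet d m p.2)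
        = ∑ p ∈ (avoidPairs_finite d m).toFinset, (P.prod P) (G p) :=
          Finset.sum_congr rfl fun p _ => e1 p
      _ = (P.prod P) (⋃ p ∈ (avoidPairs_finite d m).toFinset, G p) :=
          (measure_biUnion_finset hGdisj fun p _ => hGmeas p).symm
      _ ≤ (P.prod P) (Em d m) := measure_mono (Set.iUnion₂_subset hGsub)
  calc ∑ p ∈ (avoidPairs_finite d m).toFinset,
        (P (startSet d m p.1)).toReal * (P (startSet d m p.2)).toReal
      = (∑ p ∈ (avoidPairs_finite d m).toFinset,
          P (startSet d m p.1) * P (startSet d m p.2)).toReal := by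
        rw [ENNReal.toReal_sum
          (fun p _ => ENNReal.mul_ne_top (measure_ne_top P _) (measure_ne_top P _))]
        exact Finset.sum_congr rfl fun p _ => (ENNReal.toReal_mul).symm
    _ ≤ ((P.prod P) (Em d m)).toReal := ENNReal.toReal_mono (measure_ne_top _ _) key

/-- two independent infinite SAWs avoid each other (after time 0)
with probability at least `A⁻¹ > 0`. -/
theorem infinite_saws_avoid (d : ℕ) (P : Measure (ℕ → Fin d → ℤ))
    [IsProbabilityMeasure P] (hsupp : P (InfSAW d) = 1)
    (A μ : ℝ) (hA : 0 < A) (hμ : 0 < μ)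
    (hasymp : Tendsto (fun n => (cSAW d n : ℝ) / (A * μ ^ n)) atTop (𝓝 1))
    (hweak : ∀ k (ζ : ℕ → Fin d → ℤ), ζ ∈ SAWset d k →
      Tendsto (fun n => (cExt d n k ζ : ℝ) / (cSAW d n)) atTop
        (𝓝 ((P (startSet d k ζ)).toReal))) :
    A⁻¹ ≤ ((P.prod P) {p : (ℕ → Fin d → ℤ) × (ℕ → Fin d → ℤ) |
        ∀ i, 1 ≤ i → ∀ j, 1 ≤ j → p.1 i ≠ p.2 j}).toReal ∧ 0 < A⁻¹ := by
  classical
  refine ⟨?_, inv_pos.mpr hA⟩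
  -- the ratio limit
  have hv : Tendsto (fun n => (cSAW d (2*n) : ℝ) / (cSAW d n)^2) atTop (𝓝 A⁻¹) := by
    have h2n : Tendsto (fun n : ℕ => 2*n) atTop atTop :=
      tendsto_atTop_mono (fun n => by omega : ∀ n : ℕ, n ≤ 2*n) tendsto_id
    have hnum : Tendsto (fun n => (cSAW d (2*n) : ℝ) / (A * μ ^ (2*n))) atTop (𝓝 1) :=
      hasymp.comp h2n
    have hden : Tendsto (fun n => ((cSAW d n : ℝ) / (A * μ ^ n))^2 * A) atTop (𝓝 (1^2 * A)) :=
      (hasymp.pow 2).mul_const A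
    have hlim := hnum.div hden (by simp [hA.ne'])
    have he : (1 : ℝ) / (1^2 * A) = A⁻¹ := by field_simp
    rw [he] at hlim
    refine hlim.congr fun n => ?_
    have hAμ : A * μ ^ n ≠ 0 := by positivity
    rcases eq_or_ne ((cSAW d n : ℝ)) 0 with h | h
    · simp [h]
    · rw [Pi.div_apply]
      field_simp
      ring
  -- per-m bound on the truncated event
  have hbound : ∀ m, A⁻¹ ≤ ((P.prod P) (Em d m)).toReal := by
    intro m
    set F := (avoidPairs_finite d m).toFinset with hF
    set S : ℝ := ∑ p ∈ F, (P (startSet d m p.1)).toReal * (P (startSet d m p.2)).toReal with hSdef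
    have hsum : Tendsto (fun n => ∑ p ∈ F,
        ((cExt d n m p.1 : ℝ) / (cSAW d n)) * ((cExt d n m p.2 : ℝ) / (cSAW d n)))
        atTop (𝓝 S) := by
      refine tendsto_finset_sum F fun p hp => ?_
      rw [Set.Finite.mem_toFinset] at hp
      exact (hweak m p.1 hp.1).mul (hweak m p.2 hp.2.1)
    have hev : ∀ n, m ≤ n → (cSAW d (2*n) : ℝ) / (cSAW d n)^2 ≤
        ∑ p ∈ F, ((cExt d n m p.1 : ℝ) / (cSAW d n)) * ((cExt d n m p.2 : ℝ) / (cSAW d n)) := by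
      intro n hmn
      have hcnt : (cSAW d (2*n) : ℝ) ≤ ∑ p ∈ F, (cExt d n m p.1 : ℝ) * (cExt d n m p.2 : ℝ) := by
        have := counting d m n hmn
        calc (cSAW d (2*n) : ℝ) ≤
            ((∑ p ∈ F, cExt d n m p.1 * cExt d n m p.2 : ℕ) : ℝ) := by exact_mod_cast this
          _ = ∑ p ∈ F, (cExt d n m p.1 : ℝ) * (cExt d n m p.2 : ℝ) := by push_cast; rfl
      rcases eq_or_ne ((cSAW d n : ℝ)) 0 with h | h
      · have hL : (cSAW d (2*n) : ℝ) / (cSAW d n)^2 = 0 := by rw [h]; simp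
        rw [hL]
        exact Finset.sum_nonneg fun p _ => by positivity
      · have hpos : (0:ℝ) < (cSAW d n : ℝ)^2 := by positivity
        calc (cSAW d (2*n) : ℝ) / (cSAW d n)^2
            ≤ (∑ p ∈ F, (cExt d n m p.1 : ℝ) * (cExt d n m p.2 : ℝ)) / (cSAW d n)^2 :=
              (div_le_div_iff_of_pos_right hpos).mpr hcnt
          _ = ∑ p ∈ F, ((cExt d n m p.1 : ℝ) / (cSAW d n)) * ((cExt d n m p.2 : ℝ) / (cSAW d n)) := by
              rw [Finset.sum_div]
              refine Finset.sum_congr rfl fun p _ => ?_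
              rw [div_mul_div_comm, ← sq]
    have hAS : A⁻¹ ≤ S :=
      le_of_tendsto_of_tendsto hv hsum (Filter.eventually_atTop.mpr ⟨m, hev⟩)
    exact hAS.trans (measure_bound d m P hsupp)
  -- continuity from above
  have hiInter := tendsto_measure_iInter_atTop (μ := P.prod P)
    (fun i => (measurable_Em d i).nullMeasurableSet) (antitone_Em d) ⟨0, measure_ne_top _ _⟩
  have hlimE : Tendsto (fun m => ((P.prod P) (Em d m)).toReal) atTop
      (𝓝 (((P.prod P) (⋂ m, Em d m)).toReal)) :=
    (ENNReal.tendsto_toReal (measure_ne_top _ _)).comp hiInter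
  have := ge_of_tendsto' hlimE hbound
  rwa [iInter_Em d] at this
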